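/- In the free group F_p of rank p ≥ 2 with free basis X, letting N be the subgroup of elements of even word length, one has limsup_{n→∞} |N ∩ B_X(n)|/|B_X(n)| = (2p−2)(2p−1)/((2p−1)²−1), which is different from 1/2 = 1/[F_p : N]. -/

import Mathlib

open Filter FreeGroup List Topology

namespace EvenLP

variable {p : ℕ}

def nxt (a : Fin p × Bool) : Fin p × Bool := (a.1, !a.2)

lemma nxt_nxt (a : Fin p × Bool) : nxt (nxt a) = a := by simp [nxt]

def R (a b : Fin p × Bool) : Prop := b ≠ nxt a

lemma reduce_eq_self_of_chain' : ∀ {L : List (Fin p × Bool)}, List.Chain' R L →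
    FreeGroup.reduce L = L
  | [], _ => rfl
  | [a], _ => rfl
  | a :: hd :: tl, h => by
    rw [List.Chain', List.isChain_cons_cons] at h
    have ih := reduce_eq_self_of_chain' h.2
    rw [FreeGroup.reduce.cons, ih]
    have hne : ¬(a.1 = hd.1 ∧ a.2 = !hd.2) := by
      rintro ⟨h1, h2⟩
      exact h.1 (by simp [nxt, Prod.ext_iff, ← h1, h2])
    simp [hne]

lemma chain'_or_decomp : ∀ L : List (Fin p × Bool),
    List.Chain' R L ∨ ∃ L₂ x b L₃, L = L₂ ++ (x, b) :: (x, !b) :: L₃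
  | [] => Or.inl List.isChain_nil
  | a :: L => by
    rcases chain'_or_decomp L with h | ⟨L₂, x, b, L₃, rfl⟩
    · match L, h with
      | [], _ => exact Or.inl (List.isChain_singleton a)
      | hd :: tl, h =>
        by_cases hr : R a hd
        · exact Or.inl (List.isChain_cons_cons.2 ⟨hr, h⟩)
        · refine Or.inr ⟨[], a.1, a.2, tl, ?_⟩
          simp only [R, not_not] at hr
          simp [hr, nxt]
    · exact Or.inr ⟨a :: L₂, x, b, L₃, rfl⟩

lemma chain'_reduce (L : List (Fin p × Bool)) : List.Chain' R (FreeGroup.reduce L) := by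
  rcases chain'_or_decomp (FreeGroup.reduce L) with h | ⟨L₂, x, b, L₃, hL⟩
  · exact h
  · exact FreeGroup.reduce.not hL


/-- The set of reduced words of length `n`. -/
def S (p : ℕ) : ℕ → Finset (List (Fin p × Bool))
  | 0 => {[]}
  | n + 1 => (S p n).biUnion fun l =>
      (Finset.univ.filter fun a : Fin p × Bool => l.head? ≠ some (nxt a)).image
        fun a => a :: l

lemma head?_ne_iff (l : List (Fin p × Bool)) (a : Fin p × Bool) :
    l.head? ≠ some (nxt a) ↔ ∀ b ∈ l.head?, R a b := by
  cases l <;> simp [R, eq_comm]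

lemma mem_S : ∀ {n : ℕ} {l : List (Fin p × Bool)},
    l ∈ S p n ↔ List.Chain' R l ∧ l.length = n
  | 0, l => by
    simp only [S, Finset.mem_singleton, List.length_eq_zero_iff]
    constructor
    · rintro rfl; exact ⟨List.isChain_nil, rfl⟩
    · rintro ⟨-, rfl⟩; rfl
  | n + 1, l => by
    simp only [S, Finset.mem_biUnion, Finset.mem_image, Finset.mem_filter, Finset.mem_univ,
      true_and]
    constructor
    · rintro ⟨t, ht, a, ha, rfl⟩
      obtain ⟨hc, hlen⟩ := mem_S.1 ht
      exact ⟨List.isChain_cons.2 ⟨(head?_ne_iff t a).1 ha, hc⟩, by simp [hlen]⟩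
    · rintro ⟨hc, hlen⟩
      match l, hlen with
      | a :: t, hlen =>
        rw [List.Chain', List.isChain_cons] at hc
        exact ⟨t, mem_S.2 ⟨hc.2, by simpa using hlen⟩, a, (head?_ne_iff t a).2 hc.1, rfl⟩

lemma card_S_zero : (S p 0).card = 1 := rfl

lemma card_S_one : (S p 1).card = 2 * p := by
  have : S p 1 = Finset.univ.image fun a : Fin p × Bool => [a] := by
    simp [S, Finset.filter_true_of_mem]
  rw [this, Finset.card_image_of_injective _ (fun a b h => by simpa using h)]
  simp [Fintype.card_prod, mul_comm]

lemma card_S_succ (n : ℕ) (hn : 1 ≤ n) : (S p (n + 1)).card = (S p n).card * (2 * p - 1) := by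
  rw [show S p (n+1) = (S p n).biUnion _ from rfl, Finset.card_biUnion]
  · rw [Finset.sum_congr rfl (fun l hl => ?_), Finset.sum_const, smul_eq_mul]
    obtain ⟨hc, hlen⟩ := mem_S.1 hl
    match l, hn, hlen with
    | h :: t, _, _ =>
      rw [Finset.card_image_of_injective _ (fun a b hab => by simpa using hab)]
      have : (Finset.univ.filter fun a : Fin p × Bool => (h :: t).head? ≠ some (nxt a)) =
          Finset.univ.erase (nxt h) := by
        ext a
        simp only [Finset.mem_filter, Finset.mem_univ, true_and, Finset.mem_erase, and_true]
        rw [List.head?_cons, Ne, Option.some_inj]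
        constructor
        all_goals intro hne hne2; exact hne (by rw [hne2, nxt_nxt])
      rw [this, Finset.card_erase_of_mem (Finset.mem_univ _)]
      simp [Fintype.card_prod, mul_comm]
  · intro l₁ h₁ l₂ h₂ hne
    simp only [Finset.disjoint_left, Finset.mem_image, Finset.mem_filter]
    rintro x ⟨a, -, rfl⟩ ⟨b, -, hb⟩
    exact hne (by simpa using (List.cons_eq_cons.1 hb).2.symm)

lemma card_S (n : ℕ) (hn : 1 ≤ n) : (S p n).card = 2 * p * (2 * p - 1) ^ (n - 1) := by
  induction n with
  | zero => omega
  | succ n ih =>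
    rcases Nat.eq_zero_or_pos n with rfl | hn1
    · simpa using card_S_one
    · rw [card_S_succ n hn1, ih hn1,
        show n + 1 - 1 = (n - 1) + 1 from by omega, pow_succ, mul_assoc]

lemma chain'_toWord (w : FreeGroup (Fin p)) : List.Chain' R w.toWord := by
  rw [← FreeGroup.reduce_toWord]; exact chain'_reduce _

lemma natCard_eq (Q : ℕ → Prop) (t : Finset (List (Fin p × Bool)))
    (ht : ∀ l, l ∈ t ↔ List.Chain' R l ∧ Q l.length) :
    Nat.card {w : FreeGroup (Fin p) // Q (FreeGroup.norm w)} = t.card := by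
  rw [← Nat.card_eq_finsetCard]
  apply Nat.card_congr
  refine ⟨fun w => ⟨w.1.toWord, (ht _).2 ⟨chain'_toWord w.1, w.2⟩⟩,
    fun l => ⟨FreeGroup.mk l.1, ?_⟩, fun w => ?_, fun l => ?_⟩
  · obtain ⟨hc, hq⟩ := (ht _).1 l.2
    show Q (FreeGroup.norm (FreeGroup.mk l.1))
    rwa [FreeGroup.norm, FreeGroup.toWord_mk, reduce_eq_self_of_chain' hc]
  · exact Subtype.ext FreeGroup.mk_toWord
  · apply Subtype.ext
    show (FreeGroup.mk l.1).toWord = l.1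
    rw [FreeGroup.toWord_mk, reduce_eq_self_of_chain' ((ht _).1 l.2).1]

lemma S_disjoint : ∀ k₁ ∈ Finset.range (n + 1), ∀ k₂ ∈ Finset.range (n + 1),
    k₁ ≠ k₂ → Disjoint (S p k₁) (S p k₂) := by
  intro k₁ _ k₂ _ hne
  simp only [Finset.disjoint_left]
  intro l h1 h2
  exact hne ((mem_S.1 h1).2 ▸ (mem_S.1 h2).2 ▸ rfl)

lemma natCard_ball (n : ℕ) :
    Nat.card {w : FreeGroup (Fin p) // FreeGroup.norm w ≤ n} =
      ∑ k ∈ Finset.range (n + 1), (S p k).card := by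
  rw [natCard_eq (· ≤ n) ((Finset.range (n + 1)).biUnion (S p)) (fun l => by
    simp only [Finset.mem_biUnion, Finset.mem_range, Nat.lt_succ_iff, mem_S]
    constructor
    · rintro ⟨k, hk, hc, rfl⟩; exact ⟨hc, hk⟩
    · rintro ⟨hc, hk⟩; exact ⟨l.length, hk, hc, rfl⟩)]
  exact Finset.card_biUnion (fun k₁ h₁ k₂ h₂ h => S_disjoint k₁ h₁ k₂ h₂ h)

lemma natCard_evenBall (n : ℕ) :
    Nat.card {w : FreeGroup (Fin p) // Even (FreeGroup.norm w) ∧ FreeGroup.norm w ≤ n} =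
      ∑ k ∈ (Finset.range (n + 1)).filter Even, (S p k).card := by
  rw [natCard_eq (fun k => Even k ∧ k ≤ n)
    (((Finset.range (n + 1)).filter Even).biUnion (S p)) (fun l => by
    simp only [Finset.mem_biUnion, Finset.mem_filter, Finset.mem_range, Nat.lt_succ_iff, mem_S]
    constructor
    · rintro ⟨k, ⟨hk, he⟩, hc, rfl⟩; exact ⟨hc, he, hk⟩
    · rintro ⟨hc, he, hk⟩; exact ⟨l.length, ⟨hk, he⟩, hc, rfl⟩)]
  exact Finset.card_biUnion (fun k₁ h₁ k₂ h₂ h =>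
    S_disjoint k₁ (Finset.filter_subset _ _ h₁) k₂ (Finset.filter_subset _ _ h₂) h)

noncomputable def qr (p : ℕ) : ℝ := 2 * p - 1

lemma qr_ge (hp : 2 ≤ p) : (3 : ℝ) ≤ qr p := by
  have : (2 : ℝ) ≤ (p : ℝ) := by exact_mod_cast hp
  simp only [qr]; linarith

lemma card_S_cast (hp : 2 ≤ p) (k : ℕ) :
    ((S p (k + 1)).card : ℝ) = (qr p + 1) * qr p ^ k := by
  rw [card_S (k + 1) (by omega)]
  push_cast [Nat.cast_sub (by omega : 1 ≤ 2 * p)]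
  simp only [qr]; ring

lemma ball_sum (hp : 2 ≤ p) (n : ℕ) :
    (qr p - 1) * (∑ k ∈ Finset.range (n + 1), ((S p k).card : ℝ)) =
      (qr p + 1) * qr p ^ n - 2 := by
  induction n with
  | zero =>
    rw [Finset.sum_range_one, card_S_zero]
    norm_num
    ring
  | succ n ih =>
    rw [Finset.sum_range_succ, card_S_cast hp n]
    linear_combination ih

lemma even_filter_odd (m : ℕ) :
    (Finset.range (2 * m + 2)).filter Even = (Finset.range (2 * m + 1)).filter Even := by
  rw [Finset.range_add_one, Finset.filter_insert, if_neg (by simp [Nat.even_add_one])]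

lemma even_sum (hp : 2 ≤ p) (m : ℕ) :
    (qr p - 1) * (∑ k ∈ (Finset.range (2 * m + 1)).filter Even, ((S p k).card : ℝ)) =
      qr p ^ (2 * m + 1) - 1 := by
  induction m with
  | zero =>
    rw [show 2 * 0 + 1 = 1 from rfl, Finset.range_one, Finset.filter_singleton,
      if_pos Even.zero, Finset.sum_singleton, card_S_zero]
    norm_num
  | succ m ih =>
    have h1 : (Finset.range (2 * (m + 1) + 1)).filter Even =
        insert (2 * m + 2) ((Finset.range (2 * m + 1)).filter Even) := by
      rw [show 2 * (m + 1) + 1 = (2 * m + 2) + 1 from by ring, Finset.range_add_one,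
        Finset.filter_insert, if_pos ⟨m + 1, by ring⟩, even_filter_odd]
    rw [h1, Finset.sum_insert (by simp), card_S_cast hp (2 * m + 1),
      show 2 * (m + 1) + 1 = (2 * m + 1) + 2 from by ring, pow_add]
    linear_combination ih

noncomputable def u (p : ℕ) (n : ℕ) : ℝ :=
  (Nat.card {w : FreeGroup (Fin p) // Even (FreeGroup.norm w) ∧ FreeGroup.norm w ≤ n} : ℝ) /
    (Nat.card {w : FreeGroup (Fin p) // FreeGroup.norm w ≤ n} : ℝ)

lemma ball_cast (n : ℕ) :
    ((Nat.card {w : FreeGroup (Fin p) // FreeGroup.norm w ≤ n} : ℕ) : ℝ) =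
      ∑ k ∈ Finset.range (n + 1), ((S p k).card : ℝ) := by
  rw [natCard_ball]; push_cast; rfl

lemma evenBall_cast (n : ℕ) :
    ((Nat.card {w : FreeGroup (Fin p) // Even (FreeGroup.norm w) ∧ FreeGroup.norm w ≤ n} : ℕ) : ℝ) =
      ∑ k ∈ (Finset.range (n + 1)).filter Even, ((S p k).card : ℝ) := by
  rw [natCard_evenBall]; push_cast; rfl

lemma hb (hp : 2 ≤ p) (n : ℕ) :
    (qr p - 1) * ((Nat.card {w : FreeGroup (Fin p) // FreeGroup.norm w ≤ n} : ℕ) : ℝ) =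
      (qr p + 1) * qr p ^ n - 2 := by
  rw [ball_cast]; exact ball_sum hp n

lemma he_even (hp : 2 ≤ p) (m : ℕ) :
    (qr p - 1) * ((Nat.card {w : FreeGroup (Fin p) //
        Even (FreeGroup.norm w) ∧ FreeGroup.norm w ≤ 2 * m} : ℕ) : ℝ) =
      qr p ^ (2 * m + 1) - 1 := by
  rw [evenBall_cast]; exact even_sum hp m

lemma he_odd (hp : 2 ≤ p) (m : ℕ) :
    (qr p - 1) * ((Nat.card {w : FreeGroup (Fin p) //
        Even (FreeGroup.norm w) ∧ FreeGroup.norm w ≤ 2 * m + 1} : ℕ) : ℝ) =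
      qr p ^ (2 * m + 1) - 1 := by
  rw [evenBall_cast, show 2 * m + 1 + 1 = 2 * m + 2 from rfl, even_filter_odd]
  exact even_sum hp m

lemma u_even (hp : 2 ≤ p) (m : ℕ) :
    u p (2 * m) = (qr p ^ (2 * m + 1) - 1) / ((qr p + 1) * qr p ^ (2 * m) - 2) := by
  have hq := qr_ge hp
  have hne : qr p - 1 ≠ 0 := by linarith
  rw [u, ← he_even hp m, ← hb hp (2 * m), mul_div_mul_left _ _ hne]

lemma u_odd (hp : 2 ≤ p) (m : ℕ) :
    u p (2 * m + 1) = (qr p ^ (2 * m + 1) - 1) / ((qr p + 1) * qr p ^ (2 * m + 1) - 2) := by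
  have hq := qr_ge hp
  have hne : qr p - 1 ≠ 0 := by linarith
  rw [u, ← he_odd hp m, ← hb hp (2 * m + 1), mul_div_mul_left _ _ hne]

lemma L_le_u_even (hp : 2 ≤ p) (m : ℕ) : qr p / (qr p + 1) ≤ u p (2 * m) := by
  have hq := qr_ge hp
  have hpow : (1 : ℝ) ≤ qr p ^ (2 * m) := one_le_pow₀ (by linarith)
  rw [u_even hp m, div_le_div_iff₀ (by linarith) (by nlinarith)]
  have : qr p ^ (2 * m + 1) = qr p ^ (2 * m) * qr p := by rw [pow_succ]
  nlinarith [this]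

lemma u_odd_le_L (hp : 2 ≤ p) (m : ℕ) : u p (2 * m + 1) ≤ qr p / (qr p + 1) := by
  have hq := qr_ge hp
  have hpow : (1 : ℝ) ≤ qr p ^ (2 * m + 1) := one_le_pow₀ (by linarith)
  rw [u_odd hp m, div_le_div_iff₀ (by nlinarith) (by linarith)]
  have h1 : (qr p + 1) * 1 ≤ (qr p + 1) * qr p ^ (2 * m + 1) :=
    mul_le_mul_of_nonneg_left hpow (by linarith)
  have h0 : 0 ≤ (qr p - 1) * ((qr p + 1) * qr p ^ (2 * m + 1) - 1) :=
    mul_nonneg (by linarith) (by linarith)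
  nlinarith [h0]

lemma u_nonneg (n : ℕ) : 0 ≤ u p n :=
  div_nonneg (Nat.cast_nonneg _) (Nat.cast_nonneg _)

lemma u_le_one (hp : 2 ≤ p) (n : ℕ) : u p n ≤ 1 := by
  have hle : Nat.card {w : FreeGroup (Fin p) // Even (FreeGroup.norm w) ∧ FreeGroup.norm w ≤ n} ≤
      Nat.card {w : FreeGroup (Fin p) // FreeGroup.norm w ≤ n} := by
    rw [natCard_ball, natCard_evenBall]
    refine Finset.sum_le_sum_of_subset ?_
    intro k hk
    simp only [Finset.mem_filter] at hk
    exact hk.1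
  rw [u]
  exact div_le_one_of_le₀ (by exact_mod_cast hle) (Nat.cast_nonneg _)

lemma tendsto_u_even (hp : 2 ≤ p) :
    Tendsto (fun m => u p (2 * m)) atTop (𝓝 (qr p / (qr p + 1))) := by
  have hq := qr_ge hp
  have hq0 : qr p ≠ 0 := by linarith
  set r : ℕ → ℝ := fun m => ((qr p ^ 2)⁻¹) ^ m with hr
  have hrm : ∀ m, r m * qr p ^ (2 * m) = 1 := by
    intro m
    rw [hr, pow_mul, ← mul_pow, inv_mul_cancel₀ (by positivity), one_pow]
  have hr01 : ∀ m, 0 ≤ r m ∧ r m ≤ 1 := by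
    intro m
    constructor
    · positivity
    · apply pow_le_one₀ (by positivity)
      rw [inv_le_one_iff₀]
      right; nlinarith
  have heq : ∀ m, u p (2 * m) = (qr p - r m) / (qr p + 1 - 2 * r m) := by
    intro m
    have h1 := (hr01 m).1
    have h2 := (hr01 m).2
    have hpow : (1 : ℝ) ≤ qr p ^ (2 * m) := one_le_pow₀ (by linarith)
    rw [u_even hp m, div_eq_div_iff (by nlinarith) (by linarith)]
    have hps : qr p ^ (2 * m + 1) = qr p ^ (2 * m) * qr p := pow_succ _ _
    linear_combination (1 - qr p) * hrm m + (qr p + 1 - 2 * r m) * hps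
  have hrt : Tendsto r atTop (𝓝 0) := by
    apply tendsto_pow_atTop_nhds_zero_of_lt_one (by positivity)
    rw [inv_lt_one_iff₀]; right; nlinarith
  have hn : Tendsto (fun m => qr p - r m) atTop (𝓝 (qr p - 0)) :=
    tendsto_const_nhds.sub hrt
  have hd : Tendsto (fun m => qr p + 1 - 2 * r m) atTop (𝓝 (qr p + 1 - 2 * 0)) :=
    tendsto_const_nhds.sub (hrt.const_mul 2)
  have hdiv := hn.div hd (fun h => by rw [mul_zero, sub_zero] at h; linarith)
  rw [sub_zero, mul_zero, sub_zero] at hdiv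
  exact Tendsto.congr (fun m => (heq m).symm) hdiv

lemma limsup_u (hp : 2 ≤ p) : limsup (u p) atTop = qr p / (qr p + 1) := by
  have hq := qr_ge hp
  have hbdd : IsBoundedUnder (· ≤ ·) atTop (u p) :=
    ⟨1, eventually_map.2 (Eventually.of_forall (u_le_one hp))⟩
  have hcob : IsCoboundedUnder (· ≤ ·) atTop (u p) :=
    isCoboundedUnder_le_of_le atTop u_nonneg
  refine le_antisymm ?_ ?_
  · refine le_of_forall_pos_le_add fun ε hε => ?_
    refine limsup_le_of_le hcob ?_
    have hev : ∀ᶠ m in atTop, u p (2 * m) < qr p / (qr p + 1) + ε :=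
      (tendsto_u_even hp).eventually (gt_mem_nhds (by linarith))
    obtain ⟨N, hN⟩ := eventually_atTop.1 hev
    refine eventually_atTop.2 ⟨2 * N, fun n hn => ?_⟩
    rcases Nat.even_or_odd n with ⟨m, hm⟩ | ⟨m, hm⟩
    · have hmN : N ≤ m := by omega
      have : n = 2 * m := by omega
      rw [this]
      exact le_of_lt (hN m hmN)
    · have : n = 2 * m + 1 := by omega
      rw [this]
      linarith [u_odd_le_L hp m]
  · refine le_limsup_of_frequently_le ?_ hbdd
    refine frequently_atTop.2 fun N => ⟨2 * N, by omega, L_le_u_even hp N⟩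

end EvenLP

open Filter

/-- In the free group of rank `p ≥ 2`, the proportion in balls of the index-two
subgroup of even-length elements has limsup `(2p-2)(2p-1)/((2p-1)²-1)`, which is
different from `1/2`. -/
theorem limsup_even_length_proportion_freeGroup (p : ℕ) (hp : 2 ≤ p) :
    limsup (fun n : ℕ =>
        (Nat.card {w : FreeGroup (Fin p) // Even (FreeGroup.norm w) ∧
            FreeGroup.norm w ≤ n} : ℝ) /
          (Nat.card {w : FreeGroup (Fin p) // FreeGroup.norm w ≤ n} : ℝ)) atTop =
      ((2 * p - 2) * (2 * p - 1) : ℝ) / (((2 * p - 1) : ℝ) ^ 2 - 1) ∧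
      ((2 * p - 2) * (2 * p - 1) : ℝ) / (((2 * p - 1) : ℝ) ^ 2 - 1) ≠ 1 / 2 := by
  have hq := EvenLP.qr_ge hp
  have hkey : ((2 * p - 2) * (2 * p - 1) : ℝ) / (((2 * p - 1) : ℝ) ^ 2 - 1) =
      EvenLP.qr p / (EvenLP.qr p + 1) := by
    have h1 : ((2 * p - 1 : ℝ)) = EvenLP.qr p := rfl
    rw [h1, div_eq_div_iff (by nlinarith) (by linarith)]
    simp only [EvenLP.qr]
    ring
  constructor
  · rw [hkey]
    exact EvenLP.limsup_u hp
  · rw [hkey]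
    intro h
    rw [div_eq_div_iff (by linarith) (by norm_num)] at h
    linarith
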